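/- For g = 4: for every azygetic, essentially independent system m₁, m₂, m₃, m₄ of odd theta characteristics in 𝔽₂^4 × 𝔽₂^4, there are exactly 2 sets N = {n₁, …, n₆} of six even characteristics such that m₁, …, m₄, n₁, …, n₆ is a special fundamental system. (This is the entry '2' for g = 4 in the table of the number of terms on the right-hand side of Fay's generalized Jacobi derivative identity.) -/
import Mathlib


/-- Theta characteristics for genus `g`, identified with pairs `(a, b) ∈ 𝔽₂^g × 𝔽₂^g`,
added componentwise. -/
abbrev ThetaChar (g : ℕ) := (Fin g → ZMod 2) × (Fin g → ZMod 2)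

/-- The parity form `q(c) = a · b = ∑ᵢ aᵢ bᵢ ∈ 𝔽₂`. -/
def qform {g : ℕ} (c : ThetaChar g) : ZMod 2 := ∑ i, c.1 i * c.2 i

/-- A characteristic is odd if `q(c) = 1`. -/
def IsOddChar {g : ℕ} (c : ThetaChar g) : Prop := qform c = 1

/-- A characteristic is even if `q(c) = 0`. -/
def IsEvenChar {g : ℕ} (c : ThetaChar g) : Prop := qform c = 0

/-- A triple `c₁, c₂, c₃` is azygetic if `q(c₁+c₂+c₃) + q(c₁) + q(c₂) + q(c₃) = 1`. -/
def AzyTriple {g : ℕ} (c₁ c₂ c₃ : ThetaChar g) : Prop :=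
  qform (c₁ + c₂ + c₃) + qform c₁ + qform c₂ + qform c₃ = 1

/-- An indexed system is azygetic if every triple of members with three distinct
indices is an azygetic triple. -/
def AzySystem {g n : ℕ} (c : Fin n → ThetaChar g) : Prop :=
  ∀ i j k : Fin n, i ≠ j → j ≠ k → i ≠ k → AzyTriple (c i) (c j) (c k)

/-- A system is essentially independent if every sum over a nonempty index subset of
even cardinality is nonzero. -/
def EssInd {g n : ℕ} (c : Fin n → ThetaChar g) : Prop :=
  ∀ s : Finset (Fin n), s.Nonempty → Even s.card → ∑ i ∈ s, c i ≠ 0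

/-- The combined system `m₁, …, mₙ, n₁, …` (with `n`'s the elements of the finite set
`N`) is azygetic: every triple of members in distinct positions is azygetic. -/
def FullyAzygetic {g n : ℕ} (m : Fin n → ThetaChar g) (N : Finset (ThetaChar g)) :
    Prop :=
  AzySystem m ∧
  (∀ i j : Fin n, i ≠ j → ∀ c ∈ N, AzyTriple (m i) (m j) c) ∧
  (∀ i : Fin n, ∀ c ∈ N, ∀ c' ∈ N, c ≠ c' → AzyTriple (m i) c c') ∧
  (∀ c ∈ N, ∀ c' ∈ N, ∀ c'' ∈ N, c ≠ c' → c' ≠ c'' → c ≠ c'' → AzyTriple c c' c'')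

namespace SFS
def Bform {g : ℕ} (x y : ThetaChar g) : ZMod 2 := ∑ i, (x.1 i * y.2 i + y.1 i * x.2 i)

lemma two_eq_zero : (2 : ZMod 2) = 0 := rfl

lemma qform_add {g : ℕ} (x y : ThetaChar g) :
    qform (x + y) = qform x + qform y + Bform x y := by
  simp only [qform, Bform, ← Finset.sum_add_distrib]
  refine Finset.sum_congr rfl fun i _ => ?_
  simp only [Prod.fst_add, Prod.snd_add, Pi.add_apply]
  ring

lemma Bform_comm {g : ℕ} (x y : ThetaChar g) : Bform x y = Bform y x := by
  refine Finset.sum_congr rfl fun i _ => ?_; ring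

lemma Bform_add_left {g : ℕ} (x y z : ThetaChar g) :
    Bform (x + y) z = Bform x z + Bform y z := by
  simp only [Bform, ← Finset.sum_add_distrib]
  refine Finset.sum_congr rfl fun i _ => ?_
  simp only [Prod.fst_add, Prod.snd_add, Pi.add_apply]
  ring

lemma Bform_add_right {g : ℕ} (x y z : ThetaChar g) :
    Bform x (y + z) = Bform x y + Bform x z := by
  rw [Bform_comm, Bform_add_left, Bform_comm z x, Bform_comm y x]

lemma Bform_self {g : ℕ} (x : ThetaChar g) : Bform x x = 0 := by
  have h : ∀ a : ZMod 2, a + a = 0 := by decide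
  simp only [Bform]
  calc ∑ i, (x.1 i * x.2 i + x.1 i * x.2 i) = ∑ i : Fin g, (0 : ZMod 2) := by
        refine Finset.sum_congr rfl fun i _ => h _
    _ = 0 := Finset.sum_const_zero

lemma azy_iff {g : ℕ} (a b c : ThetaChar g) :
    AzyTriple a b c ↔ Bform a b + Bform a c + Bform b c = 1 := by
  unfold AzyTriple
  rw [qform_add (a + b) c, qform_add a b, Bform_add_left]
  constructor <;> intro h
  · linear_combination h - (qform a + qform b + qform c) * two_eq_zero
  · linear_combination h + (qform a + qform b + qform c) * two_eq_zero

lemma add_self_eq_zero {g : ℕ} (x : ThetaChar g) : x + x = 0 := by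
  have h : ∀ a : ZMod 2, a + a = 0 := by decide
  refine Prod.ext ?_ ?_ <;> funext i <;>
    simp only [Prod.fst_add, Prod.snd_add, Pi.add_apply, h, Prod.fst_zero, Prod.snd_zero,
      Pi.zero_apply]

end SFS

namespace SFS
-- ## Nat encoding of ThetaChar 5
def bz (b : Bool) : ZMod 2 := if b then 1 else 0
def decW (k : ℕ) : ThetaChar 5 :=
  (fun i => bz (k.testBit i.val), fun i => bz (k.testBit (5 + i.val)))
def qB (k : ℕ) : Bool := (0x96696996 >>> (k &&& (k >>> 5) &&& 31)) &&& 1 == 1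
def BB (a b : ℕ) : Bool := (qB (a ^^^ b)).xor ((qB a).xor (qB b))
def encW (c : ThetaChar 5) : ℕ :=
  ∑ i : Fin 5, ((c.1 i).val * 2 ^ (i : ℕ) + (c.2 i).val * 2 ^ (5 + (i : ℕ)))

lemma bz_xor (p q : Bool) : bz (p.xor q) = bz p + bz q := by revert p q; decide
lemma bz_eq_zero {b : Bool} : bz b = 0 ↔ b = false := by revert b; decide
lemma bz_eq_one {b : Bool} : bz b = 1 ↔ b = true := by revert b; decide

lemma decW_add (a b : ℕ) : decW a + decW b = decW (a ^^^ b) := by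
  refine Prod.ext ?_ ?_ <;> funext i <;>
    simp only [decW, Prod.fst_add, Prod.snd_add, Pi.add_apply, Nat.testBit_xor, bz_xor]

set_option maxRecDepth 10000 in
lemma qform_decW_fin : ∀ k : Fin 1024, qform (decW k.val) = bz (qB k.val) := by decide

set_option maxRecDepth 10000 in
lemma encW_decW_fin : ∀ k : Fin 1024, encW (decW k.val) = k.val := by decide

def decW' (k : Fin 1024) : ThetaChar 5 := decW k.val

lemma decW'_inj : Function.Injective decW' := by
  intro a b h
  have h2 : encW (decW' a) = encW (decW' b) := by rw [h]
  rw [show encW (decW' a) = a.val from encW_decW_fin a,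
    show encW (decW' b) = b.val from encW_decW_fin b] at h2
  exact Fin.val_injective h2

lemma cardW : Fintype.card (ThetaChar 5) = 1024 := by
  simp [Fintype.card_prod, Fintype.card_fun, ZMod.card]

lemma decW'_bij : Function.Bijective decW' :=
  (Fintype.bijective_iff_injective_and_card decW').mpr
    ⟨decW'_inj, by rw [Fintype.card_fin, cardW]⟩

noncomputable def eW : ThetaChar 5 ≃ Fin 1024 := (Equiv.ofBijective decW' decW'_bij).symm
noncomputable def en (x : ThetaChar 5) : ℕ := (eW x).val

lemma en_lt (x : ThetaChar 5) : en x < 1024 := (eW x).isLt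

lemma dec_en (x : ThetaChar 5) : decW (en x) = x :=
  Equiv.apply_symm_apply (Equiv.ofBijective decW' decW'_bij) x

lemma en_dec {k : ℕ} (hk : k < 1024) : en (decW k) = k :=
  congrArg Fin.val (Equiv.symm_apply_apply (Equiv.ofBijective decW' decW'_bij) ⟨k, hk⟩)

lemma en_inj : Function.Injective en := by
  intro a b h
  rw [← dec_en a, ← dec_en b, h]

lemma qform_bridge (x : ThetaChar 5) : qform x = bz (qB (en x)) := by
  conv_lhs => rw [← dec_en x]
  exact qform_decW_fin ⟨en x, en_lt x⟩

lemma Bform_eq_q {g : ℕ} (x y : ThetaChar g) :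
    Bform x y = qform (x + y) + qform x + qform y := by
  rw [qform_add]
  linear_combination (-(qform x) - qform y) * two_eq_zero

lemma Bform_bridge (x y : ThetaChar 5) : Bform x y = bz (BB (en x) (en y)) := by
  have hxy : en x ^^^ en y < 1024 := by
    have h10 : (1024 : ℕ) = 2 ^ 10 := by norm_num
    rw [h10]
    exact Nat.xor_lt_two_pow (h10 ▸ en_lt x) (h10 ▸ en_lt y)
  have h1 : qform (x + y) = bz (qB (en x ^^^ en y)) := by
    conv_lhs => rw [← dec_en x, ← dec_en y, decW_add]
    exact qform_decW_fin ⟨_, hxy⟩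
  rw [Bform_eq_q, h1, qform_bridge x, qform_bridge y, BB, bz_xor, bz_xor]; ring

end SFS
namespace SFS
-- ## Transvections
variable {g : ℕ}

def tv (u x : ThetaChar g) : ThetaChar g := if Bform x u = 1 then x + u else x

lemma zmod2_ne_one {a : ZMod 2} (h : ¬a = 1) : a = 0 := by revert a; decide

lemma zmod2_add_self (a : ZMod 2) : a + a = 0 := by revert a; decide

lemma add_cancel_left (a t : ThetaChar g) : a + (a + t) = t := by
  rw [← add_assoc, add_self_eq_zero, zero_add]

lemma tv_q {u : ThetaChar g} (hu : qform u = 1) (x : ThetaChar g) :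
    qform (tv u x) = qform x := by
  unfold tv; split_ifs with h
  · rw [qform_add, hu, h]; linear_combination two_eq_zero
  · rfl

lemma tv_B {u : ThetaChar g} (x y : ThetaChar g) :
    Bform (tv u x) (tv u y) = Bform x y := by
  unfold tv; split_ifs with h1 h2 h2
  · rw [Bform_add_left, Bform_add_right, Bform_add_right, Bform_self, h1,
      Bform_comm u y, h2]
    linear_combination two_eq_zero
  · rw [Bform_add_left, Bform_comm u y, zmod2_ne_one h2, add_zero]
  · rw [Bform_add_right, zmod2_ne_one h1, add_zero]
  · rfl

lemma tv_add {u : ThetaChar g} (x y : ThetaChar g) : tv u (x + y) = tv u x + tv u y := by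
  unfold tv
  rw [Bform_add_left]
  by_cases h1 : Bform x u = 1 <;> by_cases h2 : Bform y u = 1
  · rw [h1, h2, if_neg (by decide : ¬((1 : ZMod 2) + 1 = 1)), if_pos rfl, if_pos rfl,
      add_add_add_comm, add_self_eq_zero, add_zero]
  · rw [h1, zmod2_ne_one h2, if_pos (by decide : ((1 : ZMod 2) + 0 = 1)), if_pos rfl,
      if_neg (by decide : ¬((0 : ZMod 2) = 1)), add_right_comm]
  · rw [zmod2_ne_one h1, h2, if_pos (by decide : ((0 : ZMod 2) + 1 = 1)),
      if_neg (by decide : ¬((0 : ZMod 2) = 1)), if_pos rfl, add_assoc]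
  · rw [zmod2_ne_one h1, zmod2_ne_one h2,
      if_neg (by decide : ¬((0 : ZMod 2) + 0 = 1)),
      if_neg (by decide : ¬((0 : ZMod 2) = 1)),
      if_neg (by decide : ¬((0 : ZMod 2) = 1))]

lemma tv_invol {u : ThetaChar g} (x : ThetaChar g) : tv u (tv u x) = x := by
  by_cases h : Bform x u = 1
  · have h2 : Bform (x + u) u = 1 := by rw [Bform_add_left, Bform_self, add_zero]; exact h
    rw [show tv u x = x + u from by rw [tv, if_pos h], tv, if_pos h2, add_assoc,
      add_self_eq_zero, add_zero]
  · rw [show tv u x = x from by rw [tv, if_neg h], tv, if_neg h]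

lemma tv_bij (u : ThetaChar g) : Function.Bijective (tv u) :=
  Function.Involutive.bijective (fun x => tv_invol x)

lemma tv_fix {u f : ThetaChar g} (h : Bform f u = 0) : tv u f = f := by
  rw [tv, h, if_neg (by decide : ¬((0 : ZMod 2) = 1))]

/-- Witt-style move. -/
lemma move (F : List (ThetaChar g)) (v t : ThetaChar g)
    (hqv : qform v = 1) (hqt : qform t = 1)
    (hprof : ∀ f ∈ F, Bform v f = Bform t f)
    (hex : v ≠ t → Bform v t = 0 → ∃ w, qform w = 1 ∧ Bform w v = 1 ∧ Bform w t = 1 ∧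
      ∀ f ∈ F, Bform w f = 0) :
    ∃ σ : ThetaChar g → ThetaChar g, σ v = t ∧ (∀ f ∈ F, σ f = f) ∧
      Function.Bijective σ ∧ (∀ x, qform (σ x) = qform x) ∧
      (∀ x y, Bform (σ x) (σ y) = Bform x y) ∧ (∀ x y, σ (x + y) = σ x + σ y) := by
  by_cases hvt : v = t
  · exact ⟨id, hvt, fun f _ => rfl, Function.bijective_id, fun x => rfl,
      fun x y => rfl, fun x y => rfl⟩
  by_cases hB : Bform v t = 1
  · have hq : qform (v + t) = 1 := by rw [qform_add, hqv, hqt, hB]; decide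
    refine ⟨tv (v + t), ?_, ?_, tv_bij _, tv_q hq, tv_B, tv_add⟩
    · rw [tv, Bform_add_right, Bform_self, hB, zero_add, if_pos rfl, add_cancel_left]
    · intro f hf
      apply tv_fix
      rw [Bform_add_right, Bform_comm f v, Bform_comm f t, hprof f hf, zmod2_add_self]
  · have hB0 : Bform v t = 0 := zmod2_ne_one hB
    obtain ⟨w, hqw, hwv, hwt, hwF⟩ := hex hvt hB0
    have hvw : Bform v w = 1 := (Bform_comm v w).trans hwv
    have hqvw : qform (v + w) = 1 := by
      rw [qform_add, hqv, hqw, hvw]; decide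
    have hq2 : qform (v + w + t) = 1 := by
      rw [qform_add, hqvw, hqt, Bform_add_left, hB0, hwt]; decide
    have hstep1 : tv w v = v + w := by rw [tv, if_pos hvw]
    refine ⟨fun x => tv (v + w + t) (tv w x), ?_, ?_,
      (tv_bij _).comp (tv_bij _),
      fun x => by
        show qform (tv _ (tv _ x)) = _
        rw [tv_q hq2, tv_q hqw],
      fun x y => by
        show Bform (tv _ (tv _ x)) (tv _ (tv _ y)) = _
        rw [tv_B, tv_B],
      fun x y => by
        show tv _ (tv _ (x + y)) = tv _ (tv _ x) + tv _ (tv _ y)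
        rw [tv_add, tv_add]⟩
    · show tv (v + w + t) (tv w v) = t
      have hc : Bform (v + w) (v + w + t) = 1 := by
        rw [Bform_add_right, Bform_self, zero_add, Bform_add_left, hB0, hwt]; decide
      rw [hstep1, tv, if_pos hc]
      exact add_cancel_left _ _
    · intro f hf
      have h1 : tv w f = f := tv_fix ((Bform_comm f w).trans (hwF f hf))
      show tv (v + w + t) (tv w f) = f
      rw [h1]
      apply tv_fix
      rw [Bform_add_right, Bform_add_right, Bform_comm f v, Bform_comm f w,
        Bform_comm f t, hprof f hf, hwF f hf, add_zero, zmod2_add_self]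

end SFS
namespace SFS
-- ## Concrete data and decidable facts
def tbl1 : Nat := 0x4300000000000004700000000470004300000000000000000000000000000000000000000000011c00000000000010c000000010c0011c0000000000000000000000000000000000000000000000000000000000004700043000470004300000000000000000000000000000000000000000000000000000000000010c0011c0010c0011c0000000000000000000000000000000000000000000000000000000000004b000000004b0004300000000430000000000000000000000000000000000000000000000000010c000000010c0012c000000012c000000000000000000000000000000000000000000000000004b000430004b0004300000000000000000000000000000000000000000000000000000000000010c0012c0010c0012c00000000000000000000000000000000000000000000000000000000000000000000004700043000000000000047000430000000000000000000000000000000000000000000000000010c0011c00000000000010c0011c000000000000000000000000000000000000000000000000004700043000000000000047000430000000000000000000000000000000000000000000000000010c0011c00000000000010c0011c000000000000000000000000000000000000000000000000000000043000000004300000000430000000043000000000000000000000000000000000000000000000188000000018800000001880000000188000000000000000000000000000000000000000000000000000000000000000000000000000000000000000000000000000000000000000000000000000000000000000000000000000000000000000000000000000011c0010c000000010c00000000000011c0000000000000000000000000000000000000000000004700000000000004300000000430004700000000000000000000000000000000000000000000011c0010c000000000000000000000011c0010c0000000000000000000000000000000000000000000000000000000430004700043000470000000000000000000000000000000000000000000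000000010c000000010c00000000000012c000000012c000000000000000000000000000000000000000000000000004300000000430004b000000004b0000000000000000000000000000000000000000000000000000000000000000012c0010c0012c0010c000000000000000000000000000000000000000000000430004b000430004b00000000000000000000000000000000000000000000000000000000000010c00000000000011c0010c00000000000011c00000000000000000000000000000000000000000000000000430004700000000000004300047000000000000000000000000000000000000000000000000000000011c0010c00000000000011c0010c000000000000000000000000000000000000000000000430004700000000000004300047000000000000000000000000000000000000000000000000000000021c0000000214000000021c00000002140000000000000000000000000000000000000000000008500000000870000000085000000008700000000000000000000000000000000000000000000030c0010c002140010c0030c0010c002140000000000000000000000000000000000000000000000000000000000000000000000000000000000000000000000000000000000000000000000000000000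
def tbl2 : Nat := 0x9400000000940000000000000000000000000000000000000000000000000000000000000000000000000002500000000250000000000000000000000000000000000000000000000000000000094000000000000000000000000000094000000000000000000000000000000000000000000000000000000025000000002500000000000000000000000000000000000000000000000000000000a400000000a400000000000000000000000000000000000000000000000000000000000000000000000000029000000002900000000000000000000000000000000000000000000000000000000000000000000000000000000000000a400000000a4000000000000000000000000000000000000000000000290000000029000000000000000000000000000000000000000000000000000000000000000000940000000000000000009400000000000000000000000000000000000000000000000000000000000000000250000000000000000002500000000000000000000000000000000000000000000000000000000000000000094000000000000000000940000000000000000000000000000000000000000000002500000000000000000025000000000000000000000000000000000000000000000000000000000000000000000000000000000000000000000000000000000000000000000000000000000000000000000000000000000000000000000000000000000000000000000000000000000000000000000000000021800000004280000000218000000000000000000000000000000000000000000000000000000000000000000000000000000000000000000000000000000000000002100000000210000000000000000000000000000000000000000000000000008400000000000000000000000000008400000000000000000000000000000000000000000000000000000000000021000000002100000000000000000000000000000000000000000000000000000000000000000000000840000000084000000000000000000000000000000000000000000000000000000000000210000000021000000000000000000000000000000000000000000000000000000000000000000000000000000000840000000084000000000000000000000000000000000000000000000000002100000000210000000000000000000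0000000000000000000000000000000000000000000000000000840000000084000000000000000000000000000000000000000000000000000000000000000000000021000000000000000000210000000000000000000000000000000000000000000000000000000000000840000000000000000008400000000000000000000000000000000000000000000000000210000000000000000002100000000000000000000000000000000000000000000000000000000000008400000000000000000084000000000000000000000000000000000000000000000000000000000000000000000000000000000000000000000000000000000000000000000000000000000000084000000008400000000840000000000000000000000000000000000000000000000000000000000000000000000000000000000000000000000000000000000000000000000000000000000000000000000000000000000000000000000000000000000000000000000000000000000000000000000000
def tbl3 : Nat := 0x21300000000000000000000000000021300000000000000000000000000000000000000000000000000000000000085c000000085c000000000000000000000000000000000000000000000000000000000000000000000217000000021700000000000000000000000000000000000000000000000000000000000084c000000084c000000000000000000000000000000000000000000000000000000000000000000000000000000021300000002130000000000000000000000000000000000000000000000000086c000000086c00000000000000000000000000000000000000000000000000000000000000000000021b000000021b00000000000000000000000000000000000000000000000000000000000084c000000084c0000000000000000000000000000000000000000000000000000000000000000000000000000000213000000000000000002130000000000000000000000000000000000000000000000000085c0000000000000000085c00000000000000000000000000000000000000000000000000000000000217000000000000000002170000000000000000000000000000000000000000000000000084c0000000000000000084c0000000000000000000000000000000000000000000000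0000000000000213000000021300000002130000000000000000000000000000000000000000000000000000000000000000000000000000000000000000000000000000000000000000000000000000000000000000000000000000000000000000000000000000000000000000000000000000000000000000000000000000000000000000000000000000000000000000000000000000000000000000000000000000000
def tbl4 : Nat := 0x1080000000000000000000000000001080000000000000000000000000000000000000000000000000000000000000000046000000004600000000000000000000000000000000000000000000000000000000000000000000000000000000000000000000000000000000000000000000000000000000000000000000000000000000000000000000000000000000000000000000000000000000000000000000000000000000000000108000000010800000000000000000000000000000000000000000000000000000004a000000004a0000000000000000000000000000000000000000000000000000000000000000000000000000000000000000000000000000000000000000000000000000000000000000000000000000000000000000000000000000000000000000000000000000000000000000000000000000000000000010800000000000000000108000000000000000000000000000000000000000000000000000000046000000000000000000460000000000000000000000000000000000000000000000000000000000000000000000000000000000000000000000000000000000000000000000000000000000000000000000000000000000000000000000000000000000000000000000000000000000000000001080000000108000000010800000000000000000000000000000000000000000000000000000000000000000000000000000000000000000000000000000000000000000000000000000000000000000000000000000000000000000000000000000000000000000000000000000000000000000000000000000000000000000000000000000000000000000000000000000000000000000000000000000000000000000000000000000000000000000000000000000000000000000000000000000000000000000000000000000000000000000000000000000000000000000000000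0000000000000000000000000000000000000000000000000000000000000000000000000000000000000000000000000000000000000000000000000000000000000000000000000000000000000000000000000000000000000000000000000000000000000000000000000000000000000000000000000000000000000000000000000000000000000000000000000000000000000000000000000000000000000000000000000000000000000000000000000000000000000000000000000000000000000000000000000000000000000000000000000000000000000000000000000000000000000000000000000000000000000000000000000000000000000000000000000000000000000000000000000000000000000000000000000000000000000000000000000000000000000000000000000000000000000000000000000000000000000000000000000000000000000000000000000000000000000000000000000000000000000000000000000000000000000000000000000000000000000000000000000000000000000000000000000000000000000000000000000000000000000000000000000000000000000000000000000000000000000000000000000000000000000000000000000000000000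
def pick (T v : ℕ) : ℕ := (T >>> (10 * v)) &&& 1023

def S0N : Finset ℕ := {710, 718, 741, 749, 842, 846, 873, 877, 966, 970, 997, 1001}
def X1N : Finset ℕ := {710, 749, 846, 873, 970, 997}
def X2N : Finset ℕ := {718, 741, 842, 877, 966, 1001}

set_option maxRecDepth 10000 in
lemma EN1 : ∀ v : Fin 1024, qB v.val = true → BB v.val 528 = true → v.val ≠ 49 →
    BB v.val 49 = false →
    pick tbl1 v.val < 1024 ∧ qB (pick tbl1 v.val) = true ∧
    BB (pick tbl1 v.val) v.val = true ∧ BB (pick tbl1 v.val) 49 = true ∧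
    BB (pick tbl1 v.val) 528 = false := by decide

set_option maxRecDepth 10000 in
lemma EN2 : ∀ v : Fin 1024, qB v.val = true → BB v.val 528 = true → BB v.val 49 = true →
    v.val ≠ 545 → v.val ≠ 83 → BB v.val 83 = false →
    pick tbl2 v.val < 1024 ∧ qB (pick tbl2 v.val) = true ∧
    BB (pick tbl2 v.val) v.val = true ∧ BB (pick tbl2 v.val) 83 = true ∧
    BB (pick tbl2 v.val) 528 = false ∧ BB (pick tbl2 v.val) 49 = false := by decide

set_option maxRecDepth 10000 in
lemma EN3 : ∀ v : Fin 1024, qB v.val = true → BB v.val 528 = true → BB v.val 49 = true →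
    BB v.val 83 = true → v.val ≠ 114 → BB v.val 114 = false →
    pick tbl3 v.val < 1024 ∧ qB (pick tbl3 v.val) = true ∧
    BB (pick tbl3 v.val) v.val = true ∧ BB (pick tbl3 v.val) 114 = true ∧
    BB (pick tbl3 v.val) 528 = false ∧ BB (pick tbl3 v.val) 49 = false ∧
    BB (pick tbl3 v.val) 83 = false := by decide

set_option maxRecDepth 10000 in
lemma EN4 : ∀ v : Fin 1024, qB v.val = true → BB v.val 528 = true → BB v.val 49 = true →
    BB v.val 83 = true → BB v.val 114 = true → v.val ≠ 547 → BB v.val 547 = false →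
    pick tbl4 v.val < 1024 ∧ qB (pick tbl4 v.val) = true ∧
    BB (pick tbl4 v.val) v.val = true ∧ BB (pick tbl4 v.val) 547 = true ∧
    BB (pick tbl4 v.val) 528 = false ∧ BB (pick tbl4 v.val) 49 = false ∧
    BB (pick tbl4 v.val) 83 = false ∧ BB (pick tbl4 v.val) 114 = false := by decide

set_option maxRecDepth 10000 in
lemma memS0N : ∀ v : Fin 1024, (qB v.val = false ∧ BB v.val 528 = true ∧
    BB v.val 49 = true ∧ BB v.val 83 = true ∧ BB v.val 114 = true ∧
    BB v.val 547 = true) ↔ v.val ∈ S0N := by decide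

lemma triangleN : ∀ a ∈ S0N, ∀ b ∈ S0N, ∀ c ∈ S0N, a ≠ b → a ≠ c → b ≠ c →
    BB a b = true → BB a c = true → BB b c = true →
    ((a ∈ X1N ∧ b ∈ X1N ∧ c ∈ X1N) ∨ (a ∈ X2N ∧ b ∈ X2N ∧ c ∈ X2N)) := by decide

lemma pairN : ∀ a ∈ X1N, ∀ b ∈ X1N, a ≠ b → BB a b = true := by decide
lemma pairN2 : ∀ a ∈ X2N, ∀ b ∈ X2N, a ≠ b → BB a b = true := by decide
lemma X1N_disj : ∀ a ∈ X1N, a ∉ X2N := by decide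
lemma X1N_sub : X1N ⊆ S0N := by decide
lemma X2N_sub : X2N ⊆ S0N := by decide
lemma S0N_lt : ∀ a ∈ S0N, a < 1024 := by decide
lemma X1N_card : X1N.card = 6 := by decide
lemma X2N_card : X2N.card = 6 := by decide
lemma X1N_ne_X2N : X1N ≠ X2N := by decide

end SFS
namespace SFS
-- ## The counting predicate in genus 5
def hW : ThetaChar 5 := decW 528
def tW1 : ThetaChar 5 := decW 49
def tW2 : ThetaChar 5 := decW 83
def tW3 : ThetaChar 5 := decW 114
def tW4 : ThetaChar 5 := decW 547
def tW : Fin 4 → ThetaChar 5 := ![tW1, tW2, tW3, tW4]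

def PredW (v : Fin 4 → ThetaChar 5) (X : Finset (ThetaChar 5)) : Prop :=
  X.card = 6 ∧ (∀ w ∈ X, qform w = 0) ∧ (∀ w ∈ X, Bform w hW = 1) ∧
  (∀ w ∈ X, ∀ i : Fin 4, Bform w (v i) = 1) ∧
  (∀ w ∈ X, ∀ w' ∈ X, w ≠ w' → Bform w w' = 1)

lemma en_hW : en hW = 528 := en_dec (by norm_num)
lemma en_tW1 : en tW1 = 49 := en_dec (by norm_num)
lemma en_tW2 : en tW2 = 83 := en_dec (by norm_num)
lemma en_tW3 : en tW3 = 114 := en_dec (by norm_num)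
lemma en_tW4 : en tW4 = 547 := en_dec (by norm_num)

-- ## Invariance of the count under q/B-preserving maps fixing hW
lemma pred_map {σ : ThetaChar 5 → ThetaChar 5} (hinj : Function.Injective σ)
    (hq : ∀ x, qform (σ x) = qform x) (hB : ∀ x y, Bform (σ x) (σ y) = Bform x y)
    (hh : σ hW = hW) (v : Fin 4 → ThetaChar 5) (X : Finset (ThetaChar 5))
    (hX : PredW v X) : PredW (σ ∘ v) (X.image σ) := by
  obtain ⟨hcard, hq0, hBh, hBv, hpair⟩ := hX
  refine ⟨by rw [Finset.card_image_of_injective _ hinj, hcard], ?_, ?_, ?_, ?_⟩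
  · rintro w hw
    obtain ⟨x, hx, rfl⟩ := Finset.mem_image.mp hw
    rw [hq]; exact hq0 x hx
  · rintro w hw
    obtain ⟨x, hx, rfl⟩ := Finset.mem_image.mp hw
    rw [← hh, hB]; exact hBh x hx
  · rintro w hw i
    obtain ⟨x, hx, rfl⟩ := Finset.mem_image.mp hw
    rw [Function.comp_apply, hB]; exact hBv x hx i
  · rintro w hw w' hw' hne
    obtain ⟨x, hx, rfl⟩ := Finset.mem_image.mp hw
    obtain ⟨x', hx', rfl⟩ := Finset.mem_image.mp hw'
    rw [hB]; exact hpair x hx x' hx' (fun h => hne (by rw [h]))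

lemma pred_ncard_eq {σ : ThetaChar 5 → ThetaChar 5} (hbij : Function.Bijective σ)
    (hq : ∀ x, qform (σ x) = qform x) (hB : ∀ x y, Bform (σ x) (σ y) = Bform x y)
    (hh : σ hW = hW) (v : Fin 4 → ThetaChar 5) :
    {X : Finset (ThetaChar 5) | PredW v X}.ncard =
      {X : Finset (ThetaChar 5) | PredW (σ ∘ v) X}.ncard := by
  set τ := Equiv.ofBijective σ hbij with hτ
  have hτa : ∀ x, τ x = σ x := fun x => rfl
  have hsymm : ∀ y, σ (τ.symm y) = y := fun y => by
    rw [← hτa]; exact τ.apply_symm_apply y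
  have hq' : ∀ y, qform (τ.symm y) = qform y := fun y => by
    conv_rhs => rw [← hsymm y]
    rw [hq]
  have hB' : ∀ y y', Bform (τ.symm y) (τ.symm y') = Bform y y' := fun y y' => by
    conv_rhs => rw [← hsymm y, ← hsymm y']
    rw [hB]
  have hh' : τ.symm hW = hW := by
    have h0 : τ.symm (σ hW) = hW := by rw [← hτa]; exact τ.symm_apply_apply hW
    rwa [hh] at h0
  have himg : (fun X : Finset (ThetaChar 5) => X.image σ) '' {X | PredW v X} =
      {X | PredW (σ ∘ v) X} := by
    ext Y
    constructor
    · rintro ⟨X, hX, rfl⟩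
      exact pred_map hbij.injective hq hB hh v X hX
    · intro hY
      refine ⟨Y.image τ.symm, ?_, ?_⟩
      · have h2 := pred_map τ.symm.injective hq' hB' hh' (σ ∘ v) Y hY
        have h3 : (⇑τ.symm ∘ (σ ∘ v)) = v := by
          funext i
          show τ.symm (σ (v i)) = v i
          rw [← hτa]; exact τ.symm_apply_apply (v i)
        rwa [h3] at h2
      · show (Finset.image (⇑τ.symm) Y).image σ = Y
        rw [Finset.image_image]
        have h4 : (σ ∘ ⇑τ.symm) = id := funext fun y => hsymm y
        rw [h4, Finset.image_id]
  rw [← himg, Set.ncard_image_of_injective _ (Finset.image_injective hbij.injective)]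

-- ## The canonical count
def X1W : Finset (ThetaChar 5) := X1N.image decW
def X2W : Finset (ThetaChar 5) := X2N.image decW

lemma en_image_decW {s : Finset ℕ} (hs : ∀ a ∈ s, a < 1024) :
    (s.image decW).image en = s := by
  rw [Finset.image_image]
  calc s.image (en ∘ decW) = s.image id := Finset.image_congr fun a ha => en_dec (hs a ha)
    _ = s := Finset.image_id

lemma X1W_en : X1W.image en = X1N := en_image_decW fun a ha => S0N_lt a (X1N_sub ha)
lemma X2W_en : X2W.image en = X2N := en_image_decW fun a ha => S0N_lt a (X2N_sub ha)

lemma image_en_decW (X : Finset (ThetaChar 5)) : (X.image en).image decW = X := by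
  rw [Finset.image_image]
  calc X.image (decW ∘ en) = X.image id := Finset.image_congr fun w _ => dec_en w
    _ = X := Finset.image_id

lemma predW_of_XN {s : Finset ℕ} (hsub : s ⊆ S0N) (hcard : s.card = 6)
    (hpair : ∀ a ∈ s, ∀ b ∈ s, a ≠ b → BB a b = true) : PredW tW (s.image decW) := by
  have hlt : ∀ a ∈ s, a < 1024 := fun a ha => S0N_lt a (hsub ha)
  have hen : ∀ a ∈ s, en (decW a) = a := fun a ha => en_dec (hlt a ha)
  have hmem : ∀ w ∈ s.image decW, ∃ a ∈ s, decW a = w := by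
    intro w hw
    obtain ⟨a, ha, rfl⟩ := Finset.mem_image.mp hw
    exact ⟨a, ha, rfl⟩
  have hS0 : ∀ a ∈ s, qB a = false ∧ BB a 528 = true ∧ BB a 49 = true ∧
      BB a 83 = true ∧ BB a 114 = true ∧ BB a 547 = true := by
    intro a ha
    exact (memS0N ⟨a, hlt a ha⟩).mpr (hsub ha)
  have hinj : Set.InjOn decW ↑s := by
    intro a ha b hb h
    rw [← hen a (by simpa using ha), ← hen b (by simpa using hb), h]
  refine ⟨by rw [Finset.card_image_of_injOn hinj, hcard], ?_, ?_, ?_, ?_⟩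
  · intro w hw
    obtain ⟨a, ha, rfl⟩ := hmem w hw
    rw [qform_bridge, hen a ha, (hS0 a ha).1]; rfl
  · intro w hw
    obtain ⟨a, ha, rfl⟩ := hmem w hw
    rw [Bform_bridge, hen a ha, en_hW, (hS0 a ha).2.1]; rfl
  · intro w hw i
    obtain ⟨a, ha, rfl⟩ := hmem w hw
    fin_cases i
    · show Bform (decW a) (tW 0) = 1
      rw [show tW 0 = tW1 from rfl, Bform_bridge, hen a ha, en_tW1, (hS0 a ha).2.2.1]; rfl
    · show Bform (decW a) (tW 1) = 1
      rw [show tW 1 = tW2 from rfl, Bform_bridge, hen a ha, en_tW2, (hS0 a ha).2.2.2.1]; rfl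
    · show Bform (decW a) (tW 2) = 1
      rw [show tW 2 = tW3 from rfl, Bform_bridge, hen a ha, en_tW3,
        (hS0 a ha).2.2.2.2.1]; rfl
    · show Bform (decW a) (tW 3) = 1
      rw [show tW 3 = tW4 from rfl, Bform_bridge, hen a ha, en_tW4,
        (hS0 a ha).2.2.2.2.2]; rfl
  · intro w hw w' hw' hne
    obtain ⟨a, ha, rfl⟩ := hmem w hw
    obtain ⟨b, hb, rfl⟩ := hmem w' hw'
    have hab : a ≠ b := fun h => hne (by rw [h])
    rw [Bform_bridge, hen a ha, hen b hb, hpair a ha b hb hab]; rfl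

lemma count_canonical : {X : Finset (ThetaChar 5) | PredW tW X} = {X1W, X2W} := by
  ext X
  simp only [Set.mem_setOf_eq, Set.mem_insert_iff, Set.mem_singleton_iff]
  constructor
  · rintro ⟨hcard, hq0, hBh, hBv, hpair⟩
    have hS0 : ∀ w ∈ X, en w ∈ S0N := by
      intro w hw
      refine (memS0N ⟨en w, en_lt w⟩).mp ⟨?_, ?_, ?_, ?_, ?_, ?_⟩
      · exact bz_eq_zero.mp ((qform_bridge w).symm.trans (hq0 w hw))
      · refine bz_eq_one.mp ?_
        rw [← en_hW, ← Bform_bridge]; exact hBh w hw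
      · refine bz_eq_one.mp ?_
        rw [← en_tW1, ← Bform_bridge]; exact hBv w hw 0
      · refine bz_eq_one.mp ?_
        rw [← en_tW2, ← Bform_bridge]; exact hBv w hw 1
      · refine bz_eq_one.mp ?_
        rw [← en_tW3, ← Bform_bridge]; exact hBv w hw 2
      · refine bz_eq_one.mp ?_
        rw [← en_tW4, ← Bform_bridge]; exact hBv w hw 3
    set Y := X.image en with hYdef
    have hYS0 : ∀ a ∈ Y, a ∈ S0N := by
      intro a ha
      obtain ⟨w, hw, rfl⟩ := Finset.mem_image.mp ha
      exact hS0 w hw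
    have hYadj : ∀ a ∈ Y, ∀ b ∈ Y, a ≠ b → BB a b = true := by
      intro a ha b hb hab
      obtain ⟨w, hw, rfl⟩ := Finset.mem_image.mp ha
      obtain ⟨w', hw', rfl⟩ := Finset.mem_image.mp hb
      have hww : w ≠ w' := fun h => hab (by rw [h])
      exact bz_eq_one.mp ((Bform_bridge w w').symm.trans (hpair w hw w' hw' hww))
    have hYcard : Y.card = 6 := by
      rw [hYdef, Finset.card_image_of_injective _ en_inj, hcard]
    have h1 : Y.Nonempty := Finset.card_pos.mp (by rw [hYcard]; norm_num)
    obtain ⟨x, hx⟩ := h1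
    have h2 : (Y.erase x).Nonempty := Finset.card_pos.mp (by
      rw [Finset.card_erase_of_mem hx, hYcard]; norm_num)
    obtain ⟨y, hy⟩ := h2
    have h3 : ((Y.erase x).erase y).Nonempty := Finset.card_pos.mp (by
      rw [Finset.card_erase_of_mem hy, Finset.card_erase_of_mem hx, hYcard]; norm_num)
    obtain ⟨z, hz⟩ := h3
    have hyY : y ∈ Y := Finset.mem_of_mem_erase hy
    have hzY : z ∈ Y := Finset.mem_of_mem_erase (Finset.mem_of_mem_erase hz)
    have hxy : x ≠ y := fun h => (Finset.mem_erase.mp hy).1 h.symm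
    have hyz : y ≠ z := fun h => (Finset.mem_erase.mp hz).1 h.symm
    have hxz : x ≠ z := fun h =>
      (Finset.mem_erase.mp (Finset.mem_of_mem_erase hz)).1 h.symm
    have tri := triangleN x (hYS0 x hx) y (hYS0 y hyY) z (hYS0 z hzY) hxy hxz hyz
      (hYadj x hx y hyY hxy) (hYadj x hx z hzY hxz) (hYadj y hyY z hzY hyz)
    have key : Y = X1N ∨ Y = X2N := by
      rcases tri with ⟨hx1, hy1, _⟩ | ⟨hx2, hy2, _⟩
      · left
        refine Finset.eq_of_subset_of_card_le ?_ (by rw [hYcard, X1N_card])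
        intro a ha
        by_cases hax : a = x
        · rwa [hax]
        by_cases hay : a = y
        · rwa [hay]
        have tri2 := triangleN x (hYS0 x hx) y (hYS0 y hyY) a (hYS0 a ha) hxy
          (fun h => hax h.symm) (fun h => hay h.symm)
          (hYadj x hx y hyY hxy) (hYadj x hx a ha (fun h => hax h.symm))
          (hYadj y hyY a ha (fun h => hay h.symm))
        rcases tri2 with ⟨_, _, ha1⟩ | ⟨hx2, _, _⟩
        · exact ha1
        · exact absurd hx2 (fun h => X1N_disj x hx1 h)
      · right
        refine Finset.eq_of_subset_of_card_le ?_ (by rw [hYcard, X2N_card])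
        intro a ha
        by_cases hax : a = x
        · rwa [hax]
        by_cases hay : a = y
        · rwa [hay]
        have tri2 := triangleN x (hYS0 x hx) y (hYS0 y hyY) a (hYS0 a ha) hxy
          (fun h => hax h.symm) (fun h => hay h.symm)
          (hYadj x hx y hyY hxy) (hYadj x hx a ha (fun h => hax h.symm))
          (hYadj y hyY a ha (fun h => hay h.symm))
        rcases tri2 with ⟨hx1, _, _⟩ | ⟨_, _, ha2⟩
        · exact absurd hx2 (fun h => X1N_disj x hx1 h)
        · exact ha2
    rcases key with hk | hk
    · left
      rw [← image_en_decW X, ← hYdef, hk]; rfl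
    · right
      rw [← image_en_decW X, ← hYdef, hk]; rfl
  · rintro (rfl | rfl)
    · exact predW_of_XN X1N_sub X1N_card pairN
    · exact predW_of_XN X2N_sub X2N_card pairN2

lemma X1W_ne_X2W : X1W ≠ X2W := by
  intro h
  apply X1N_ne_X2N
  rw [← X1W_en, ← X2W_en, h]

lemma count_canonical_ncard : {X : Finset (ThetaChar 5) | PredW tW X}.ncard = 2 := by
  rw [count_canonical]
  exact Set.ncard_pair X1W_ne_X2W

end SFS
namespace SFS
-- ## Existence lemmas at the ThetaChar 5 level
lemma E1W (x : ThetaChar 5) (h1 : qform x = 1) (h2 : Bform x hW = 1)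
    (h3 : x ≠ tW1) (h4 : Bform x tW1 = 0) :
    ∃ w, qform w = 1 ∧ Bform w x = 1 ∧ Bform w tW1 = 1 ∧ Bform w hW = 0 := by
  have hk : qB (en x) = true := bz_eq_one.mp ((qform_bridge x).symm.trans h1)
  have hkh : BB (en x) 528 = true := bz_eq_one.mp (by
    rw [← en_hW, ← Bform_bridge]; exact h2)
  have hk49 : en x ≠ 49 := fun h => h3 (by rw [← dec_en x, h]; rfl)
  have hkB : BB (en x) 49 = false := bz_eq_zero.mp (by
    rw [← en_tW1, ← Bform_bridge]; exact h4)
  obtain ⟨hplt, hp1, hp2, hp3, hp4⟩ := EN1 ⟨en x, en_lt x⟩ hk hkh hk49 hkB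
  refine ⟨decW (pick tbl1 (en x)), ?_, ?_, ?_, ?_⟩
  · rw [qform_bridge, en_dec hplt, hp1]; rfl
  · rw [Bform_bridge, en_dec hplt, hp2]; rfl
  · rw [Bform_bridge, en_dec hplt, en_tW1, hp3]; rfl
  · rw [Bform_bridge, en_dec hplt, en_hW, hp4]; rfl

lemma E2W (x : ThetaChar 5) (h1 : qform x = 1) (h2 : Bform x hW = 1)
    (h2' : Bform x tW1 = 1) (h545 : x ≠ hW + tW1)
    (h3 : x ≠ tW2) (h4 : Bform x tW2 = 0) :
    ∃ w, qform w = 1 ∧ Bform w x = 1 ∧ Bform w tW2 = 1 ∧ Bform w hW = 0 ∧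
      Bform w tW1 = 0 := by
  have hsum : hW + tW1 = decW 545 := by
    rw [hW, tW1, decW_add, show 528 ^^^ 49 = 545 from by decide]
  have hk : qB (en x) = true := bz_eq_one.mp ((qform_bridge x).symm.trans h1)
  have hkh : BB (en x) 528 = true := bz_eq_one.mp (by
    rw [← en_hW, ← Bform_bridge]; exact h2)
  have hk1 : BB (en x) 49 = true := bz_eq_one.mp (by
    rw [← en_tW1, ← Bform_bridge]; exact h2')
  have hk545 : en x ≠ 545 := fun h => h545 (by rw [← dec_en x, h, hsum])
  have hk83 : en x ≠ 83 := fun h => h3 (by rw [← dec_en x, h]; rfl)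
  have hkB : BB (en x) 83 = false := bz_eq_zero.mp (by
    rw [← en_tW2, ← Bform_bridge]; exact h4)
  obtain ⟨hplt, hp1, hp2, hp3, hp4, hp5⟩ :=
    EN2 ⟨en x, en_lt x⟩ hk hkh hk1 hk545 hk83 hkB
  refine ⟨decW (pick tbl2 (en x)), ?_, ?_, ?_, ?_, ?_⟩
  · rw [qform_bridge, en_dec hplt, hp1]; rfl
  · rw [Bform_bridge, en_dec hplt, hp2]; rfl
  · rw [Bform_bridge, en_dec hplt, en_tW2, hp3]; rfl
  · rw [Bform_bridge, en_dec hplt, en_hW, hp4]; rfl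
  · rw [Bform_bridge, en_dec hplt, en_tW1, hp5]; rfl

lemma E3W (x : ThetaChar 5) (h1 : qform x = 1) (h2 : Bform x hW = 1)
    (h2' : Bform x tW1 = 1) (h2'' : Bform x tW2 = 1)
    (h3 : x ≠ tW3) (h4 : Bform x tW3 = 0) :
    ∃ w, qform w = 1 ∧ Bform w x = 1 ∧ Bform w tW3 = 1 ∧ Bform w hW = 0 ∧
      Bform w tW1 = 0 ∧ Bform w tW2 = 0 := by
  have hk : qB (en x) = true := bz_eq_one.mp ((qform_bridge x).symm.trans h1)
  have hkh : BB (en x) 528 = true := bz_eq_one.mp (by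
    rw [← en_hW, ← Bform_bridge]; exact h2)
  have hk1 : BB (en x) 49 = true := bz_eq_one.mp (by
    rw [← en_tW1, ← Bform_bridge]; exact h2')
  have hk2 : BB (en x) 83 = true := bz_eq_one.mp (by
    rw [← en_tW2, ← Bform_bridge]; exact h2'')
  have hk114 : en x ≠ 114 := fun h => h3 (by rw [← dec_en x, h]; rfl)
  have hkB : BB (en x) 114 = false := bz_eq_zero.mp (by
    rw [← en_tW3, ← Bform_bridge]; exact h4)
  obtain ⟨hplt, hp1, hp2, hp3, hp4, hp5, hp6⟩ :=
    EN3 ⟨en x, en_lt x⟩ hk hkh hk1 hk2 hk114 hkB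
  refine ⟨decW (pick tbl3 (en x)), ?_, ?_, ?_, ?_, ?_, ?_⟩
  · rw [qform_bridge, en_dec hplt, hp1]; rfl
  · rw [Bform_bridge, en_dec hplt, hp2]; rfl
  · rw [Bform_bridge, en_dec hplt, en_tW3, hp3]; rfl
  · rw [Bform_bridge, en_dec hplt, en_hW, hp4]; rfl
  · rw [Bform_bridge, en_dec hplt, en_tW1, hp5]; rfl
  · rw [Bform_bridge, en_dec hplt, en_tW2, hp6]; rfl

lemma E4W (x : ThetaChar 5) (h1 : qform x = 1) (h2 : Bform x hW = 1)
    (h2' : Bform x tW1 = 1) (h2'' : Bform x tW2 = 1) (h2''' : Bform x tW3 = 1)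
    (h3 : x ≠ tW4) (h4 : Bform x tW4 = 0) :
    ∃ w, qform w = 1 ∧ Bform w x = 1 ∧ Bform w tW4 = 1 ∧ Bform w hW = 0 ∧
      Bform w tW1 = 0 ∧ Bform w tW2 = 0 ∧ Bform w tW3 = 0 := by
  have hk : qB (en x) = true := bz_eq_one.mp ((qform_bridge x).symm.trans h1)
  have hkh : BB (en x) 528 = true := bz_eq_one.mp (by
    rw [← en_hW, ← Bform_bridge]; exact h2)
  have hk1 : BB (en x) 49 = true := bz_eq_one.mp (by
    rw [← en_tW1, ← Bform_bridge]; exact h2')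
  have hk2 : BB (en x) 83 = true := bz_eq_one.mp (by
    rw [← en_tW2, ← Bform_bridge]; exact h2'')
  have hk3 : BB (en x) 114 = true := bz_eq_one.mp (by
    rw [← en_tW3, ← Bform_bridge]; exact h2''')
  have hk547 : en x ≠ 547 := fun h => h3 (by rw [← dec_en x, h]; rfl)
  have hkB : BB (en x) 547 = false := bz_eq_zero.mp (by
    rw [← en_tW4, ← Bform_bridge]; exact h4)
  obtain ⟨hplt, hp1, hp2, hp3, hp4, hp5, hp6, hp7⟩ :=
    EN4 ⟨en x, en_lt x⟩ hk hkh hk1 hk2 hk3 hk547 hkB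
  refine ⟨decW (pick tbl4 (en x)), ?_, ?_, ?_, ?_, ?_, ?_, ?_⟩
  · rw [qform_bridge, en_dec hplt, hp1]; rfl
  · rw [Bform_bridge, en_dec hplt, hp2]; rfl
  · rw [Bform_bridge, en_dec hplt, en_tW4, hp3]; rfl
  · rw [Bform_bridge, en_dec hplt, en_hW, hp4]; rfl
  · rw [Bform_bridge, en_dec hplt, en_tW1, hp5]; rfl
  · rw [Bform_bridge, en_dec hplt, en_tW2, hp6]; rfl
  · rw [Bform_bridge, en_dec hplt, en_tW3, hp7]; rfl

-- concrete values
lemma qt1 : qform tW1 = 1 := by decide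
lemma qt2 : qform tW2 = 1 := by decide
lemma qt3 : qform tW3 = 1 := by decide
lemma qt4 : qform tW4 = 1 := by decide
lemma Bt1h : Bform tW1 hW = 1 := by decide
lemma Bt2h : Bform tW2 hW = 1 := by decide
lemma Bt3h : Bform tW3 hW = 1 := by decide
lemma Bt4h : Bform tW4 hW = 1 := by decide
lemma Bt21 : Bform tW2 tW1 = 1 := by decide
lemma Bt31 : Bform tW3 tW1 = 1 := by decide
lemma Bt32 : Bform tW3 tW2 = 1 := by decide
lemma Bt41 : Bform tW4 tW1 = 1 := by decide
lemma Bt42 : Bform tW4 tW2 = 1 := by decide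
lemma Bt43 : Bform tW4 tW3 = 1 := by decide

theorem mainW (v : Fin 4 → ThetaChar 5) (hq : ∀ i, qform (v i) = 1)
    (hB : ∀ i j : Fin 4, i ≠ j → Bform (v i) (v j) = 1)
    (hh : ∀ i, Bform (v i) hW = 1)
    (hne : v 1 ≠ hW + v 0) :
    {X : Finset (ThetaChar 5) | PredW v X}.ncard = 2 := by
  classical
  -- Step 1: move v 0 to tW1 fixing hW
  obtain ⟨σ1, hσ1v, hσ1F, hσ1bij, hσ1q, hσ1B, hσ1add⟩ :=
    move [hW] (v 0) tW1 (hq 0) qt1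
      (by
        intro f hf
        simp only [List.mem_singleton] at hf
        subst hf
        rw [hh 0, Bt1h])
      (by
        intro hvt hB0
        obtain ⟨w, a1, a2, a3, a4⟩ := E1W (v 0) (hq 0) (hh 0) hvt hB0
        refine ⟨w, a1, a2, a3, ?_⟩
        intro f hf
        simp only [List.mem_singleton] at hf
        subst hf
        exact a4)
  have hσ1h : σ1 hW = hW := hσ1F hW (by simp)
  set v1 : Fin 4 → ThetaChar 5 := σ1 ∘ v with hv1
  have hq1 : ∀ i, qform (v1 i) = 1 := fun i => by
    show qform (σ1 (v i)) = 1
    rw [hσ1q]; exact hq i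
  have hB1 : ∀ i j : Fin 4, i ≠ j → Bform (v1 i) (v1 j) = 1 := fun i j hij => by
    show Bform (σ1 (v i)) (σ1 (v j)) = 1
    rw [hσ1B]; exact hB i j hij
  have hh1 : ∀ i, Bform (v1 i) hW = 1 := fun i => by
    show Bform (σ1 (v i)) hW = 1
    rw [← hσ1h, hσ1B]; exact hh i
  have hv10 : v1 0 = tW1 := hσ1v
  have hne1 : v1 1 ≠ hW + tW1 := by
    intro h
    apply hne
    have h2 : σ1 (hW + v 0) = hW + tW1 := by rw [hσ1add, hσ1h, hσ1v]
    exact hσ1bij.injective (h.trans h2.symm)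
  have step1 : {X : Finset (ThetaChar 5) | PredW v X}.ncard =
      {X : Finset (ThetaChar 5) | PredW v1 X}.ncard :=
    pred_ncard_eq hσ1bij hσ1q hσ1B hσ1h v
  -- Step 2: move v1 1 to tW2 fixing hW, tW1
  obtain ⟨σ2, hσ2v, hσ2F, hσ2bij, hσ2q, hσ2B, hσ2add⟩ :=
    move [hW, tW1] (v1 1) tW2 (hq1 1) qt2
      (by
        intro f hf
        simp only [List.mem_cons, List.mem_singleton, List.not_mem_nil, or_false] at hf
        rcases hf with rfl | rfl
        · rw [hh1 1, Bt2h]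
        · have hx : Bform (v1 1) tW1 = 1 := by rw [← hv10]; exact hB1 1 0 (by decide)
          rw [hx, Bt21])
      (by
        intro hvt hB0
        have hBt1 : Bform (v1 1) tW1 = 1 := by rw [← hv10]; exact hB1 1 0 (by decide)
        obtain ⟨w, a1, a2, a3, a4, a5⟩ := E2W (v1 1) (hq1 1) (hh1 1) hBt1 hne1 hvt hB0
        refine ⟨w, a1, a2, a3, ?_⟩
        intro f hf
        simp only [List.mem_cons, List.mem_singleton, List.not_mem_nil, or_false] at hf
        rcases hf with rfl | rfl
        · exact a4
        · exact a5)
  have hσ2h : σ2 hW = hW := hσ2F hW (by simp)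
  have hσ2t1 : σ2 tW1 = tW1 := hσ2F tW1 (by simp)
  set v2 : Fin 4 → ThetaChar 5 := σ2 ∘ v1 with hv2
  have hq2 : ∀ i, qform (v2 i) = 1 := fun i => by
    show qform (σ2 (v1 i)) = 1
    rw [hσ2q]; exact hq1 i
  have hB2 : ∀ i j : Fin 4, i ≠ j → Bform (v2 i) (v2 j) = 1 := fun i j hij => by
    show Bform (σ2 (v1 i)) (σ2 (v1 j)) = 1
    rw [hσ2B]; exact hB1 i j hij
  have hh2 : ∀ i, Bform (v2 i) hW = 1 := fun i => by
    show Bform (σ2 (v1 i)) hW = 1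
    rw [← hσ2h, hσ2B]; exact hh1 i
  have hv20 : v2 0 = tW1 := by
    show σ2 (v1 0) = tW1
    rw [hv10, hσ2t1]
  have hv21 : v2 1 = tW2 := hσ2v
  have step2 : {X : Finset (ThetaChar 5) | PredW v1 X}.ncard =
      {X : Finset (ThetaChar 5) | PredW v2 X}.ncard :=
    pred_ncard_eq hσ2bij hσ2q hσ2B hσ2h v1
  -- Step 3: move v2 2 to tW3 fixing hW, tW1, tW2
  obtain ⟨σ3, hσ3v, hσ3F, hσ3bij, hσ3q, hσ3B, hσ3add⟩ :=
    move [hW, tW1, tW2] (v2 2) tW3 (hq2 2) qt3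
      (by
        intro f hf
        simp only [List.mem_cons, List.mem_singleton, List.not_mem_nil, or_false] at hf
        rcases hf with rfl | rfl | rfl
        · rw [hh2 2, Bt3h]
        · have hx : Bform (v2 2) tW1 = 1 := by rw [← hv20]; exact hB2 2 0 (by decide)
          rw [hx, Bt31]
        · have hx : Bform (v2 2) tW2 = 1 := by rw [← hv21]; exact hB2 2 1 (by decide)
          rw [hx, Bt32])
      (by
        intro hvt hB0
        have hBt1 : Bform (v2 2) tW1 = 1 := by rw [← hv20]; exact hB2 2 0 (by decide)
        have hBt2 : Bform (v2 2) tW2 = 1 := by rw [← hv21]; exact hB2 2 1 (by decide)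
        obtain ⟨w, a1, a2, a3, a4, a5, a6⟩ :=
          E3W (v2 2) (hq2 2) (hh2 2) hBt1 hBt2 hvt hB0
        refine ⟨w, a1, a2, a3, ?_⟩
        intro f hf
        simp only [List.mem_cons, List.mem_singleton, List.not_mem_nil, or_false] at hf
        rcases hf with rfl | rfl | rfl
        · exact a4
        · exact a5
        · exact a6)
  have hσ3h : σ3 hW = hW := hσ3F hW (by simp)
  have hσ3t1 : σ3 tW1 = tW1 := hσ3F tW1 (by simp)
  have hσ3t2 : σ3 tW2 = tW2 := hσ3F tW2 (by simp)
  set v3 : Fin 4 → ThetaChar 5 := σ3 ∘ v2 with hv3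
  have hq3 : ∀ i, qform (v3 i) = 1 := fun i => by
    show qform (σ3 (v2 i)) = 1
    rw [hσ3q]; exact hq2 i
  have hB3 : ∀ i j : Fin 4, i ≠ j → Bform (v3 i) (v3 j) = 1 := fun i j hij => by
    show Bform (σ3 (v2 i)) (σ3 (v2 j)) = 1
    rw [hσ3B]; exact hB2 i j hij
  have hh3 : ∀ i, Bform (v3 i) hW = 1 := fun i => by
    show Bform (σ3 (v2 i)) hW = 1
    rw [← hσ3h, hσ3B]; exact hh2 i
  have hv30 : v3 0 = tW1 := by
    show σ3 (v2 0) = tW1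
    rw [hv20, hσ3t1]
  have hv31 : v3 1 = tW2 := by
    show σ3 (v2 1) = tW2
    rw [hv21, hσ3t2]
  have hv32 : v3 2 = tW3 := hσ3v
  have step3 : {X : Finset (ThetaChar 5) | PredW v2 X}.ncard =
      {X : Finset (ThetaChar 5) | PredW v3 X}.ncard :=
    pred_ncard_eq hσ3bij hσ3q hσ3B hσ3h v2
  -- Step 4: move v3 3 to tW4 fixing hW, tW1, tW2, tW3
  obtain ⟨σ4, hσ4v, hσ4F, hσ4bij, hσ4q, hσ4B, hσ4add⟩ :=
    move [hW, tW1, tW2, tW3] (v3 3) tW4 (hq3 3) qt4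
      (by
        intro f hf
        simp only [List.mem_cons, List.mem_singleton, List.not_mem_nil, or_false] at hf
        rcases hf with rfl | rfl | rfl | rfl
        · rw [hh3 3, Bt4h]
        · have hx : Bform (v3 3) tW1 = 1 := by rw [← hv30]; exact hB3 3 0 (by decide)
          rw [hx, Bt41]
        · have hx : Bform (v3 3) tW2 = 1 := by rw [← hv31]; exact hB3 3 1 (by decide)
          rw [hx, Bt42]
        · have hx : Bform (v3 3) tW3 = 1 := by rw [← hv32]; exact hB3 3 2 (by decide)
          rw [hx, Bt43])
      (by
        intro hvt hB0
        have hBt1 : Bform (v3 3) tW1 = 1 := by rw [← hv30]; exact hB3 3 0 (by decide)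
        have hBt2 : Bform (v3 3) tW2 = 1 := by rw [← hv31]; exact hB3 3 1 (by decide)
        have hBt3 : Bform (v3 3) tW3 = 1 := by rw [← hv32]; exact hB3 3 2 (by decide)
        obtain ⟨w, a1, a2, a3, a4, a5, a6, a7⟩ :=
          E4W (v3 3) (hq3 3) (hh3 3) hBt1 hBt2 hBt3 hvt hB0
        refine ⟨w, a1, a2, a3, ?_⟩
        intro f hf
        simp only [List.mem_cons, List.mem_singleton, List.not_mem_nil, or_false] at hf
        rcases hf with rfl | rfl | rfl | rfl
        · exact a4
        · exact a5
        · exact a6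
        · exact a7)
  have hσ4h : σ4 hW = hW := hσ4F hW (by simp)
  have hσ4t1 : σ4 tW1 = tW1 := hσ4F tW1 (by simp)
  have hσ4t2 : σ4 tW2 = tW2 := hσ4F tW2 (by simp)
  have hσ4t3 : σ4 tW3 = tW3 := hσ4F tW3 (by simp)
  set v4 : Fin 4 → ThetaChar 5 := σ4 ∘ v3 with hv4
  have step4 : {X : Finset (ThetaChar 5) | PredW v3 X}.ncard =
      {X : Finset (ThetaChar 5) | PredW v4 X}.ncard :=
    pred_ncard_eq hσ4bij hσ4q hσ4B hσ4h v3
  have hfinal : v4 = tW := by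
    funext i
    fin_cases i
    · show σ4 (v3 0) = tW 0
      rw [hv30, hσ4t1]; rfl
    · show σ4 (v3 1) = tW 1
      rw [hv31, hσ4t2]; rfl
    · show σ4 (v3 2) = tW 2
      rw [hv32, hσ4t3]; rfl
    · show σ4 (v3 3) = tW 3
      exact hσ4v
  rw [step1, step2, step3, step4, hfinal]
  exact count_canonical_ncard

end SFS
namespace SFS
-- ## The embedding ThetaChar 4 × label → ThetaChar 5
def emb (c : ThetaChar 4) (δ : ZMod 2) : ThetaChar 5 :=
  (Fin.snoc c.1 (1 + δ), Fin.snoc c.2 δ)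

def tr (w : ThetaChar 5) : ThetaChar 4 :=
  (fun i => w.1 i.castSucc, fun i => w.2 i.castSucc)

lemma tr_emb (c : ThetaChar 4) (δ : ZMod 2) : tr (emb c δ) = c := by
  refine Prod.ext ?_ ?_ <;> funext i <;> simp [tr, emb, Fin.snoc_castSucc]

lemma emb_inj {c c' : ThetaChar 4} {δ δ' : ZMod 2} (h : emb c δ = emb c' δ') :
    c = c' := by
  rw [← tr_emb c δ, h, tr_emb]

lemma qform_emb (c : ThetaChar 4) (δ : ZMod 2) : qform (emb c δ) = qform c := by
  have taut : ∀ d : ZMod 2, (1 + d) * d = 0 := by decide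
  unfold qform emb
  rw [Fin.sum_univ_castSucc]
  simp only [Fin.snoc_castSucc, Fin.snoc_last, taut, add_zero]

lemma Bform_emb (c c' : ThetaChar 4) (δ δ' : ZMod 2) :
    Bform (emb c δ) (emb c' δ') = Bform c c' + δ + δ' := by
  have taut : ∀ d d' : ZMod 2, (1 + d) * d' + (1 + d') * d = d + d' := by decide
  unfold Bform emb
  rw [Fin.sum_univ_castSucc]
  simp only [Fin.snoc_castSucc, Fin.snoc_last, taut, add_assoc]

def hS : ThetaChar 5 :=
  (Fin.snoc (0 : Fin 4 → ZMod 2) 1, Fin.snoc (0 : Fin 4 → ZMod 2) 1)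

lemma hW_eq : hW = hS := by decide

lemma Bform_hW (w : ThetaChar 5) :
    Bform w hW = w.1 (Fin.last 4) + w.2 (Fin.last 4) := by
  rw [hW_eq]
  unfold Bform hS
  rw [Fin.sum_univ_castSucc]
  simp only [Fin.snoc_castSucc, Fin.snoc_last, Pi.zero_apply, mul_zero, zero_mul,
    add_zero, zero_add, mul_one, one_mul, Finset.sum_const_zero]

lemma Bform_emb_hW (c : ThetaChar 4) (δ : ZMod 2) : Bform (emb c δ) hW = 1 := by
  have taut : ∀ d : ZMod 2, (1 + d) + d = 1 := by decide
  rw [Bform_hW]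
  simp only [emb, Fin.snoc_last]
  exact taut δ

lemma eq_emb (w : ThetaChar 5) (hw : w.1 (Fin.last 4) + w.2 (Fin.last 4) = 1) :
    w = emb (tr w) (w.2 (Fin.last 4)) := by
  have taut : ∀ a b : ZMod 2, a + b = 1 → a = 1 + b := by decide
  refine Prod.ext ?_ ?_ <;> funext i <;>
    refine Fin.lastCases ?_ (fun j => ?_) i
  · simp only [emb, Fin.snoc_last]
    exact taut _ _ hw
  · simp only [emb, Fin.snoc_castSucc]
    rfl
  · simp only [emb, Fin.snoc_last]
  · simp only [emb, Fin.snoc_castSucc]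
    rfl

end SFS

namespace SFS

def epsm (m : Fin 4 → ThetaChar 4) (i : Fin 4) : ZMod 2 :=
  if i = 0 then 0 else Bform (m 0) (m i) + 1
def vsys (m : Fin 4 → ThetaChar 4) (i : Fin 4) : ThetaChar 5 := emb (m i) (epsm m i)
def psi (m : Fin 4 → ThetaChar 4) (n : ThetaChar 4) : ThetaChar 5 :=
  emb n (Bform (m 0) n + 1)

lemma psi_inj (m : Fin 4 → ThetaChar 4) : Function.Injective (psi m) :=
  fun n n' h => emb_inj h

theorem main_genus4 (m : Fin 4 → ThetaChar 4) (hodd : ∀ i, IsOddChar (m i))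
    (hazy : AzySystem m) :
    Set.ncard {N : Finset (ThetaChar 4) |
        N.card = 6 ∧ (∀ c ∈ N, IsEvenChar c) ∧ FullyAzygetic m N} = 2 := by
  classical
  have hε0 : epsm m 0 = 0 := by simp [epsm]
  have hεi : ∀ i, i ≠ 0 → epsm m i = Bform (m 0) (m i) + 1 := by
    intro i hi; simp [epsm, hi]
  have hε : ∀ i j, i ≠ j → Bform (m i) (m j) = epsm m i + epsm m j + 1 := by
    intro i j hij
    by_cases hi : i = 0
    · subst hi
      have hj : j ≠ 0 := fun h => hij h.symm
      rw [hε0, hεi j hj]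
      exact (by decide : ∀ b : ZMod 2, b = 0 + (b + 1) + 1) _
    · by_cases hj : j = 0
      · subst hj
        rw [hε0, hεi i hi, Bform_comm]
        exact (by decide : ∀ b : ZMod 2, b = b + 1 + 0 + 1) _
      · have key := (azy_iff _ _ _).mp
          (hazy 0 i j (fun h => hi h.symm) hij (fun h => hj h.symm))
        rw [hεi i hi, hεi j hj]
        exact (by decide : ∀ a b c : ZMod 2, a + b + c = 1 → c = a + 1 + (b + 1) + 1)
          _ _ _ key
  have hmne : ∀ i j : Fin 4, i ≠ j → m i ≠ m j := by
    intro i j hij h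
    obtain ⟨k, hki, hkj⟩ := (by decide : ∀ i j : Fin 4, ∃ k, k ≠ i ∧ k ≠ j) i j
    have key := (azy_iff _ _ _).mp
      (hazy i j k hij (fun e => hkj e.symm) (fun e => hki e.symm))
    rw [h, Bform_self] at key
    exact (by decide : ∀ x : ZMod 2, ¬(0 + x + x = 1)) _ key
  -- hypotheses of mainW
  have hqv : ∀ i, qform (vsys m i) = 1 := fun i => by
    show qform (emb (m i) (epsm m i)) = 1
    rw [qform_emb]; exact hodd i
  have hBvv : ∀ i j : Fin 4, i ≠ j → Bform (vsys m i) (vsys m j) = 1 := fun i j hij => by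
    show Bform (emb (m i) (epsm m i)) (emb (m j) (epsm m j)) = 1
    rw [Bform_emb, hε i j hij]
    exact (by decide : ∀ a b : ZMod 2, a + b + 1 + a + b = 1) _ _
  have hhv : ∀ i, Bform (vsys m i) hW = 1 := fun i => Bform_emb_hW _ _
  have hWfst : ∀ j : Fin 4, hW.1 j.castSucc = 0 := by
    intro j
    rw [hW_eq]
    simp [hS, Fin.snoc_castSucc]
  have hWsnd : ∀ j : Fin 4, hW.2 j.castSucc = 0 := by
    intro j
    rw [hW_eq]
    simp [hS, Fin.snoc_castSucc]
  have hnev : vsys m 1 ≠ hW + vsys m 0 := by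
    intro h
    apply hmne 1 0 (by decide)
    refine Prod.ext ?_ ?_ <;> funext i
    · have e := congrArg (fun w : ThetaChar 5 => w.1 i.castSucc) h
      simp only [Prod.fst_add, Pi.add_apply] at e
      have e1 : (vsys m 1).1 i.castSucc = (m 1).1 i := by
        simp [vsys, emb, Fin.snoc_castSucc]
      have e2 : (vsys m 0).1 i.castSucc = (m 0).1 i := by
        simp [vsys, emb, Fin.snoc_castSucc]
      rw [e1, e2, hWfst i, zero_add] at e
      exact e
    · have e := congrArg (fun w : ThetaChar 5 => w.2 i.castSucc) h
      simp only [Prod.snd_add, Pi.add_apply] at e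
      have e1 : (vsys m 1).2 i.castSucc = (m 1).2 i := by
        simp [vsys, emb, Fin.snoc_castSucc]
      have e2 : (vsys m 0).2 i.castSucc = (m 0).2 i := by
        simp [vsys, emb, Fin.snoc_castSucc]
      rw [e1, e2, hWsnd i, zero_add] at e
      exact e
  -- the image correspondence
  have himg : (fun N : Finset (ThetaChar 4) => N.image (psi m)) ''
      {N : Finset (ThetaChar 4) |
        N.card = 6 ∧ (∀ c ∈ N, IsEvenChar c) ∧ FullyAzygetic m N} =
      {X : Finset (ThetaChar 5) | PredW (vsys m) X} := by
    ext X
    constructor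
    · rintro ⟨N, ⟨hcard, heven, hfa⟩, rfl⟩
      obtain ⟨hfa1, hfa2, hfa3, hfa4⟩ := hfa
      refine ⟨by rw [Finset.card_image_of_injective _ (psi_inj m), hcard], ?_, ?_, ?_, ?_⟩
      · rintro w hw
        obtain ⟨n, hn, rfl⟩ := Finset.mem_image.mp hw
        show qform (emb n (Bform (m 0) n + 1)) = 0
        rw [qform_emb]; exact heven n hn
      · rintro w hw
        obtain ⟨n, hn, rfl⟩ := Finset.mem_image.mp hw
        exact Bform_emb_hW _ _
      · rintro w hw i
        obtain ⟨n, hn, rfl⟩ := Finset.mem_image.mp hw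
        show Bform (emb n (Bform (m 0) n + 1)) (emb (m i) (epsm m i)) = 1
        rw [Bform_emb]
        by_cases hi : i = 0
        · subst hi
          rw [hε0, Bform_comm n (m 0)]
          exact (by decide : ∀ b : ZMod 2, b + (b + 1) + 0 = 1) _
        · have key := (azy_iff _ _ _).mp (hfa2 0 i (fun h => hi h.symm) n hn)
          rw [hεi i hi, Bform_comm n (m i)]
          exact (by decide : ∀ a b x : ZMod 2, a + b + x = 1 → x + (b + 1) + (a + 1) = 1)
            _ _ _ key
      · rintro w hw w' hw' hne
        obtain ⟨n, hn, rfl⟩ := Finset.mem_image.mp hw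
        obtain ⟨n', hn', rfl⟩ := Finset.mem_image.mp hw'
        have hnn : n ≠ n' := fun h => hne (by rw [h])
        have key := (azy_iff _ _ _).mp (hfa3 0 n hn n' hn' hnn)
        show Bform (emb n (Bform (m 0) n + 1)) (emb n' (Bform (m 0) n' + 1)) = 1
        rw [Bform_emb]
        exact (by decide : ∀ a b x : ZMod 2, a + b + x = 1 → x + (a + 1) + (b + 1) = 1)
          _ _ _ key
    · rintro ⟨hcard, hq0, hBh, hBX, hpair⟩
      have hlast : ∀ w ∈ X, w.1 (Fin.last 4) + w.2 (Fin.last 4) = 1 := fun w hw => by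
        rw [← Bform_hW]; exact hBh w hw
      have hw_emb : ∀ w ∈ X, w = emb (tr w) (w.2 (Fin.last 4)) :=
        fun w hw => eq_emb w (hlast w hw)
      have hδ : ∀ w ∈ X, w.2 (Fin.last 4) = Bform (m 0) (tr w) + 1 := by
        intro w hw
        have hb : Bform (emb (tr w) (w.2 (Fin.last 4))) (emb (m 0) (epsm m 0)) = 1 := by
          rw [← hw_emb w hw]; exact hBX w hw 0
        rw [Bform_emb, hε0, Bform_comm (tr w) (m 0)] at hb
        exact (by decide : ∀ b d : ZMod 2, b + d + 0 = 1 → d = b + 1) _ _ hb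
      have hψtr : ∀ w ∈ X, psi m (tr w) = w := by
        intro w hw
        show emb (tr w) (Bform (m 0) (tr w) + 1) = w
        rw [← hδ w hw, ← hw_emb w hw]
      have hψX : ∀ c ∈ X.image tr, psi m c ∈ X := by
        intro c hc
        obtain ⟨w, hw, rfl⟩ := Finset.mem_image.mp hc
        rw [hψtr w hw]; exact hw
      have htrinj : Set.InjOn tr ↑X := by
        intro a ha b hb h
        rw [← hψtr a (by simpa using ha), ← hψtr b (by simpa using hb), h]
      -- the B-facts for members of N := X.image tr
      have hA : ∀ c ∈ X.image tr, ∀ i : Fin 4,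
          Bform c (m i) + (Bform (m 0) c + 1) + epsm m i = 1 := by
        intro c hc i
        obtain ⟨w, hw, rfl⟩ := Finset.mem_image.mp hc
        have hb : Bform (emb (tr w) (Bform (m 0) (tr w) + 1)) (emb (m i) (epsm m i)) = 1 := by
          rw [show emb (tr w) (Bform (m 0) (tr w) + 1) = w from hψtr w hw]
          exact hBX w hw i
        rwa [Bform_emb] at hb
      have hP : ∀ c ∈ X.image tr, ∀ c' ∈ X.image tr, c ≠ c' →
          Bform c c' + (Bform (m 0) c + 1) + (Bform (m 0) c' + 1) = 1 := by
        intro c hc c' hc' hcc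
        have hb : Bform (emb c (Bform (m 0) c + 1)) (emb c' (Bform (m 0) c' + 1)) = 1 := by
          have := hpair (psi m c) (hψX c hc) (psi m c') (hψX c' hc')
            (fun h => hcc (psi_inj m h))
          exact this
        rwa [Bform_emb] at hb
      have hcard' : (X.image tr).card = 6 := by
        rw [Finset.card_image_of_injOn htrinj, hcard]
      have heven' : ∀ c ∈ X.image tr, IsEvenChar c := by
        intro c hc
        obtain ⟨w, hw, rfl⟩ := Finset.mem_image.mp hc
        show qform (tr w) = 0
        have h1 : qform (psi m (tr w)) = 0 := by rw [hψtr w hw]; exact hq0 w hw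
        rwa [show qform (psi m (tr w)) = qform (tr w) from qform_emb _ _] at h1
      have hfa2' : ∀ i j : Fin 4, i ≠ j → ∀ c ∈ X.image tr, AzyTriple (m i) (m j) c := by
        intro i j hij c hc
        refine (azy_iff _ _ _).mpr ?_
        rw [hε i j hij, Bform_comm (m i) c, Bform_comm (m j) c]
        exact (by decide : ∀ ei ej d x y : ZMod 2,
            x + (d + 1) + ei = 1 → y + (d + 1) + ej = 1 →
            ei + ej + 1 + x + y = 1) _ _ _ _ _ (hA c hc i) (hA c hc j)
      have hfa3' : ∀ i : Fin 4, ∀ c ∈ X.image tr, ∀ c' ∈ X.image tr, c ≠ c' →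
          AzyTriple (m i) c c' := by
        intro i c hc c' hc' hcc
        refine (azy_iff _ _ _).mpr ?_
        rw [Bform_comm (m i) c, Bform_comm (m i) c']
        exact (by decide : ∀ ei d d' x x' p : ZMod 2,
            x + (d + 1) + ei = 1 → x' + (d' + 1) + ei = 1 →
            p + (d + 1) + (d' + 1) = 1 → x + x' + p = 1)
          _ _ _ _ _ _ (hA c hc i) (hA c' hc' i) (hP c hc c' hc' hcc)
      have hfa4' : ∀ c ∈ X.image tr, ∀ c' ∈ X.image tr, ∀ c'' ∈ X.image tr,
          c ≠ c' → c' ≠ c'' → c ≠ c'' → AzyTriple c c' c'' := by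
        intro c hc c' hc' c'' hc'' h1 h2 h3
        refine (azy_iff _ _ _).mpr ?_
        exact (by decide : ∀ d d' d'' p q r : ZMod 2,
            p + (d + 1) + (d' + 1) = 1 → q + (d + 1) + (d'' + 1) = 1 →
            r + (d' + 1) + (d'' + 1) = 1 → p + q + r = 1)
          _ _ _ _ _ _ (hP c hc c' hc' h1) (hP c hc c'' hc'' h3) (hP c' hc' c'' hc'' h2)
      refine ⟨X.image tr, ⟨hcard', heven', hazy, hfa2', hfa3', hfa4'⟩, ?_⟩
      show (X.image tr).image (psi m) = X
      rw [Finset.image_image]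
      calc X.image (psi m ∘ tr) = X.image id :=
            Finset.image_congr fun w hw => hψtr w (by simpa using hw)
        _ = X := Finset.image_id
  calc {N : Finset (ThetaChar 4) |
        N.card = 6 ∧ (∀ c ∈ N, IsEvenChar c) ∧ FullyAzygetic m N}.ncard
      = ((fun N : Finset (ThetaChar 4) => N.image (psi m)) ''
          {N : Finset (ThetaChar 4) |
            N.card = 6 ∧ (∀ c ∈ N, IsEvenChar c) ∧ FullyAzygetic m N}).ncard :=
        (Set.ncard_image_of_injective _ (Finset.image_injective (psi_inj m))).symm
    _ = {X : Finset (ThetaChar 5) | PredW (vsys m) X}.ncard := by rw [himg]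
    _ = 2 := mainW (vsys m) hqv hBvv hhv hnev

end SFS

theorem card_special_fundamental_completions_genus_four
    (m : Fin 4 → ThetaChar 4) (hodd : ∀ i, IsOddChar (m i))
    (hazy : AzySystem m) (hind : EssInd m) :
    Set.ncard {N : Finset (ThetaChar 4) |
        N.card = 6 ∧ (∀ c ∈ N, IsEvenChar c) ∧ FullyAzygetic m N} = 2 :=
  SFS.main_genus4 m hodd hazy
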